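/- For a linear regression with mutually uncorrelated features, the individual XPER value of feature j for the R² metric is φ_{i,j} = σ_y^{-2}[ β̂_j(x_{i,j} − E x_j)·(2y_i − ∑_{k≠j} β̂_k(x_{i,k} + E x_k)) − β̂_j²(x_{i,j}² − E x_j²) + ∑_{k≠j} β̂_k β̂_j σ_{x_k,x_j} ], which under uncorrelated features reduces to dropping the last sum. -/

import Mathlib

open MeasureTheory Finset Nat

noncomputable def cov {Ω : Type*} [MeasurableSpace Ω] (μ : Measure Ω) (f g : Ω → ℝ) : ℝ :=
  ∫ ω, (f ω - ∫ ω', f ω' ∂μ) * (g ω - ∫ ω', g ω' ∂μ) ∂μ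

noncomputable def shapleyWeight (q : ℕ) (S : Finset (Fin q)) : ℝ :=
  ((S.card ! * (q - S.card - 1)! : ℕ) : ℝ) / (q ! : ℝ)

/-- Individual XPER value of feature `j` for individual `(y_i, x_i)`; excluded features are
marginalised out using an independent copy drawn from the joint feature distribution. -/
noncomputable def indXPER {Ω : Type*} [MeasurableSpace Ω] (μ : Measure Ω) (q : ℕ)
    (x : Fin q → Ω → ℝ) (G : ℝ → (Fin q → ℝ) → ℝ) (yi : ℝ) (xi : Fin q → ℝ)
    (j : Fin q) : ℝ :=
  ∑ S ∈ (Finset.univ.erase j).powerset, shapleyWeight q S *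
    ((∫ ω, G yi (fun k => if k ∈ insert j S then xi k else x k ω) ∂μ) -
     (∫ ω, G yi (fun k => if k ∈ S then xi k else x k ω) ∂μ))

section Aux

variable {Ω : Type*} [MeasurableSpace Ω] {μ : Measure Ω}

lemma mul_int {f g : Ω → ℝ} (hf : MemLp f 2 μ) (hg : MemLp g 2 μ) :
    Integrable (fun ω => f ω * g ω) μ := by
  have h := (((hf.add hg).integrable_sq).sub hf.integrable_sq).sub hg.integrable_sq
  have e : (fun ω => f ω * g ω) = fun ω => (((f ω + g ω) ^ 2 - f ω ^ 2) - g ω ^ 2) / 2 := by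
    funext ω; ring
  rw [e]
  exact h.div_const 2

lemma cov_eq [IsProbabilityMeasure μ] (f g : Ω → ℝ) (hf : MemLp f 2 μ) (hg : MemLp g 2 μ) :
    cov μ f g = (∫ ω, f ω * g ω ∂μ) - (∫ ω, f ω ∂μ) * (∫ ω, g ω ∂μ) := by
  have hif : Integrable f μ := hf.integrable one_le_two
  have hig : Integrable g μ := hg.integrable one_le_two
  rw [cov]
  set a := ∫ ω', f ω' ∂μ
  set b := ∫ ω', g ω' ∂μ
  have h1 : Integrable (fun ω => a * g ω + b * f ω - a * b) μ := by
    exact ((hig.const_mul a).add (hif.const_mul b)).sub (integrable_const _)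
  have e : (fun ω => (f ω - a) * (g ω - b))
      = fun ω => f ω * g ω - (a * g ω + b * f ω - a * b) := by funext ω; ring
  rw [e, integral_sub (mul_int hf hg) h1]
  have h3 : Integrable (fun ω => a * g ω + b * f ω) μ := by
    exact (hig.const_mul a).add (hif.const_mul b)
  have h2 : ∫ ω, (a * g ω + b * f ω - a * b) ∂μ = a * b + b * a - a * b := by
    rw [integral_sub h3 (integrable_const _),
      integral_add (hig.const_mul a) (hif.const_mul b), integral_const_mul, integral_const_mul,
      integral_const]
    simp
    change a * b + b * a - a * b = b * a; ring
  rw [h2]; ring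

lemma sum_memLp {q : ℕ} (x : Fin q → Ω → ℝ) (hx : ∀ k, MemLp (x k) 2 μ) (c : Fin q → ℝ) :
    MemLp (fun ω => ∑ k, c k * x k ω) 2 μ := by
  have := memLp_finset_sum' (μ := μ) (p := 2) Finset.univ
    (f := fun k => fun ω => c k * x k ω) (fun k _ => (hx k).const_mul (c k))
  simpa [Finset.sum_fn] using this

lemma nat_aux1 {m s q : ℕ} (h : m + 1 = q) (hs : s ≤ m) : q - s - 1 = m - s := by omega

lemma nat_aux2 {a q : ℕ} (h : a + 1 = q) (ha : 1 ≤ a) : a - 1 + 2 = q := by omega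

lemma nat_aux3 {m s q : ℕ} (h : m + 2 = q) (hs : s ≤ m) : q - (s + 1) - 1 = m - s := by omega

lemma sum_powerset_card {ι : Type*} (A : Finset ι) (f : ℕ → ℝ) :
    ∑ S ∈ A.powerset, f S.card = ∑ s ∈ range (A.card + 1), (A.card.choose s : ℝ) * f s := by
  rw [Finset.sum_powerset]
  refine Finset.sum_congr rfl fun s _ => ?_
  calc ∑ S ∈ powersetCard s A, f S.card = ∑ _S ∈ powersetCard s A, f s :=
        Finset.sum_congr rfl fun S hS => by rw [(Finset.mem_powersetCard.mp hS).2]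
    _ = (A.card.choose s : ℝ) * f s := by
        rw [Finset.sum_const, Finset.card_powersetCard, nsmul_eq_mul]

lemma shapley_sum_one {q : ℕ} (A : Finset (Fin q)) (hA : A.card + 1 = q) :
    ∑ S ∈ A.powerset, shapleyWeight q S = 1 := by
  have h0 := sum_powerset_card A (fun s => ((s ! * (q - s - 1)! : ℕ) : ℝ) / (q ! : ℝ))
  rw [show (∑ S ∈ A.powerset, shapleyWeight q S)
      = ∑ S ∈ A.powerset, ((S.card ! * (q - S.card - 1)! : ℕ) : ℝ) / (q ! : ℝ) from rfl, h0]
  set m := A.card with hm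
  have hterm : ∀ s ∈ range (m + 1),
      (m.choose s : ℝ) * (((s ! * (q - s - 1)! : ℕ) : ℝ) / ((q ! : ℕ) : ℝ))
        = (m ! : ℝ) / ((q ! : ℕ) : ℝ) := by
    intro s hs
    have hsm : s ≤ m := Nat.lt_succ_iff.mp (mem_range.mp hs)
    have h1 : q - s - 1 = m - s := nat_aux1 hA hsm
    have key : m.choose s * (s ! * (m - s)!) = m ! := by
      rw [← Nat.choose_mul_factorial_mul_factorial hsm]; ring
    rw [h1]
    rw [show (m.choose s : ℝ) * (((s ! * (m - s)! : ℕ) : ℝ) / ((q ! : ℕ) : ℝ))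
        = ((m.choose s * (s ! * (m - s)!) : ℕ) : ℝ) / ((q ! : ℕ) : ℝ) by push_cast; ring]
    rw [key]
  rw [Finset.sum_congr rfl hterm, Finset.sum_const, card_range, nsmul_eq_mul]
  have h0' : (m ! : ℝ) ≠ 0 := Nat.cast_ne_zero.mpr (Nat.factorial_ne_zero m)
  have hq : q ! = (m + 1) * m ! := by rw [← hA, Nat.factorial_succ]
  rw [hq]
  push_cast
  field_simp

lemma sum_range_add_one (n : ℕ) : ∑ s ∈ range n, ((s : ℝ) + 1) = n * (n + 1) / 2 := by
  induction n with
  | zero => simp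
  | succ n ih => rw [Finset.sum_range_succ, ih]; push_cast; ring

lemma shapley_sum_half {q : ℕ} (A : Finset (Fin q)) (hA : A.card + 1 = q) {k : Fin q}
    (hk : k ∈ A) :
    ∑ S ∈ A.powerset, shapleyWeight q S * (if k ∈ S then (1 : ℝ) else 0) = 1 / 2 := by
  classical
  have hkB : k ∉ A.erase k := Finset.notMem_erase k A
  rw [← Finset.insert_erase hk, Finset.sum_powerset_insert hkB]
  have hBcard' : (A.erase k).card + 2 = q := by
    rw [Finset.card_erase_of_mem hk]
    exact nat_aux2 hA (Finset.card_pos.mpr ⟨k, hk⟩)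
  set B := A.erase k with hB
  have hBcard : B.card + 2 = q := hBcard'
  have hfirst : ∑ S ∈ B.powerset, shapleyWeight q S * (if k ∈ S then (1 : ℝ) else 0) = 0 := by
    refine Finset.sum_eq_zero fun S hS => ?_
    have : k ∉ S := fun hkS => hkB (Finset.mem_powerset.mp hS hkS)
    simp [this]
  rw [hfirst, zero_add]
  have hsecond : ∀ S ∈ B.powerset,
      shapleyWeight q (insert k S) * (if k ∈ insert k S then (1 : ℝ) else 0)
        = (((S.card + 1)! * (q - (S.card + 1) - 1)! : ℕ) : ℝ) / (q ! : ℝ) := by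
    intro S hS
    have hkS : k ∉ S := fun hkS => hkB (Finset.mem_powerset.mp hS hkS)
    rw [if_pos (Finset.mem_insert_self k S), mul_one, shapleyWeight,
      Finset.card_insert_of_notMem hkS]
  rw [Finset.sum_congr rfl hsecond,
    sum_powerset_card B (fun s => (((s + 1)! * (q - (s + 1) - 1)! : ℕ) : ℝ) / (q ! : ℝ))]
  set m := B.card with hm
  have hterm : ∀ s ∈ range (m + 1),
      (m.choose s : ℝ) * ((((s + 1)! * (q - (s + 1) - 1)! : ℕ) : ℝ) / (q ! : ℝ))
        = ((s : ℝ) + 1) * ((m ! : ℕ) : ℝ) / (q ! : ℝ) := by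
    intro s hs
    have hsm : s ≤ m := Nat.lt_succ_iff.mp (mem_range.mp hs)
    have h1 : q - (s + 1) - 1 = m - s := nat_aux3 hBcard hsm
    have key : m.choose s * (s ! * (m - s)!) = m ! := by
      rw [← Nat.choose_mul_factorial_mul_factorial hsm]; ring
    rw [h1, Nat.factorial_succ]
    rw [show (m.choose s : ℝ) * ((((s + 1) * s ! * (m - s)! : ℕ) : ℝ) / (q ! : ℝ))
        = ((s : ℝ) + 1) * ((m.choose s * (s ! * (m - s)!) : ℕ) : ℝ) / (q ! : ℝ) by
          push_cast; ring]
    rw [key]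
  rw [Finset.sum_congr rfl hterm]
  have hq : q ! = (m + 2) * ((m + 1) * m !) := by
    rw [← hBcard]
    rw [show m + 2 = (m + 1) + 1 from rfl, Nat.factorial_succ, Nat.factorial_succ]
  have hsum : ∑ s ∈ range (m + 1), ((s : ℝ) + 1) * ((m ! : ℕ) : ℝ) / (q ! : ℝ)
      = (∑ s ∈ range (m + 1), ((s : ℝ) + 1)) * ((m ! : ℕ) : ℝ) / (q ! : ℝ) := by
    rw [Finset.sum_mul, Finset.sum_div]
  rw [hsum, sum_range_add_one, hq]
  have h0' : (m ! : ℝ) ≠ 0 := Nat.cast_ne_zero.mpr (Nat.factorial_ne_zero m)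
  push_cast
  field_simp
  ring

lemma integral_diff [IsProbabilityMeasure μ] {q : ℕ} (x : Fin q → Ω → ℝ)
    (hx : ∀ k, MemLp (x k) 2 μ) (β : Fin q → ℝ) (σ2 : ℝ) (yi : ℝ) (xi : Fin q → ℝ)
    (j : Fin q) (S : Finset (Fin q)) (hjS : j ∉ S) :
    (∫ ω, (1 - (yi - ∑ k, β k * (if k ∈ insert j S then xi k else x k ω)) ^ 2 / σ2) ∂μ) -
      (∫ ω, (1 - (yi - ∑ k, β k * (if k ∈ S then xi k else x k ω)) ^ 2 / σ2) ∂μ)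
    = ((β j) ^ 2 * ((∫ ω, x j ω * x j ω ∂μ) - xi j ^ 2)
        + 2 * β j * (yi - ∑ k ∈ S, β k * xi k) * (xi j - ∫ ω, x j ω ∂μ)
        + 2 * β j * ∑ k, (if k ∈ insert j S then 0 else β k)
            * ((∫ ω, x k ω * x j ω ∂μ) - xi j * ∫ ω, x k ω ∂μ)) / σ2 := by
  have hGmem : ∀ A : Finset (Fin q),
      Integrable (fun ω => 1 - (yi - ∑ k, β k * (if k ∈ A then xi k else x k ω)) ^ 2 / σ2) μ := by
    intro A
    have hpt : (fun ω => 1 - (yi - ∑ k, β k * (if k ∈ A then xi k else x k ω)) ^ 2 / σ2)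
        = fun ω => 1 - ((yi - ∑ k ∈ A, β k * xi k)
            - ∑ k, (if k ∈ A then 0 else β k) * x k ω) ^ 2 / σ2 := by
      funext ω
      have e : ∑ k, β k * (if k ∈ A then xi k else x k ω)
          = (∑ k ∈ A, β k * xi k) + ∑ k, (if k ∈ A then 0 else β k) * x k ω := by
        calc ∑ k, β k * (if k ∈ A then xi k else x k ω)
            = ∑ k, ((if k ∈ A then β k * xi k else 0) + (if k ∈ A then 0 else β k) * x k ω) :=
              Finset.sum_congr rfl fun k _ => by by_cases hk : k ∈ A <;> simp [hk]
          _ = (∑ k, if k ∈ A then β k * xi k else 0)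
              + ∑ k, (if k ∈ A then 0 else β k) * x k ω := Finset.sum_add_distrib
          _ = (∑ k ∈ A, β k * xi k) + ∑ k, (if k ∈ A then 0 else β k) * x k ω := by
              rw [Finset.sum_ite_mem, Finset.univ_inter]
      rw [e]; ring
    rw [hpt]
    have hmem : MemLp (fun ω => (yi - ∑ k ∈ A, β k * xi k)
        - ∑ k, (if k ∈ A then 0 else β k) * x k ω) 2 μ := by
      exact (memLp_const _).sub (sum_memLp x hx _)
    exact (integrable_const 1).sub (hmem.integrable_sq.div_const σ2)
  rw [← integral_sub (hGmem (insert j S)) (hGmem S)]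
  set cT : Fin q → ℝ := fun k => if k ∈ insert j S then 0 else β k with hcT
  set aS : ℝ := yi - ∑ k ∈ S, β k * xi k with haS
  have hint_u : Integrable (fun ω => x j ω * x j ω - xi j ^ 2) μ :=
    (mul_int (hx j) (hx j)).sub (integrable_const _)
  have hint_v : Integrable (fun ω => xi j - x j ω) μ :=
    (integrable_const _).sub ((hx j).integrable one_le_two)
  have hint_w1 : ∀ k, Integrable (fun ω => cT k * (x k ω * x j ω - xi j * x k ω)) μ := fun k =>
    ((mul_int (hx k) (hx j)).sub (((hx k).integrable one_le_two).const_mul (xi j))).const_mul _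
  have hint_w : Integrable (fun ω => ∑ k, cT k * (x k ω * x j ω - xi j * x k ω)) μ :=
    integrable_finset_sum univ fun k _ => hint_w1 k
  have hclaim : ∀ ω,
      ((1 - (yi - ∑ k, β k * (if k ∈ insert j S then xi k else x k ω)) ^ 2 / σ2) -
        (1 - (yi - ∑ k, β k * (if k ∈ S then xi k else x k ω)) ^ 2 / σ2))
      = ((β j) ^ 2 * (x j ω * x j ω - xi j ^ 2) + 2 * β j * aS * (xi j - x j ω)
          + 2 * β j * ∑ k, cT k * (x k ω * x j ω - xi j * x k ω)) / σ2 := by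
    intro ω
    have eT : ∑ k, β k * (if k ∈ insert j S then xi k else x k ω)
        = (∑ k ∈ S, β k * xi k) + β j * xi j + ∑ k, cT k * x k ω := by
      calc ∑ k, β k * (if k ∈ insert j S then xi k else x k ω)
          = ∑ k, ((if k ∈ S then β k * xi k else 0) + (if k = j then β j * xi j else 0)
              + cT k * x k ω) := by
            refine Finset.sum_congr rfl fun k _ => ?_
            by_cases hkj : k = j
            · subst hkj; simp [hjS, hcT]
            · by_cases hk : k ∈ S <;> simp [hk, hkj, hcT, Finset.mem_insert]
        _ = ((∑ k, if k ∈ S then β k * xi k else 0) + ∑ k, (if k = j then β j * xi j else 0))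
            + ∑ k, cT k * x k ω := by rw [Finset.sum_add_distrib, Finset.sum_add_distrib]
        _ = (∑ k ∈ S, β k * xi k) + β j * xi j + ∑ k, cT k * x k ω := by
            rw [Finset.sum_ite_mem, Finset.univ_inter, Finset.sum_ite_eq']
            simp
    have eS : ∑ k, β k * (if k ∈ S then xi k else x k ω)
        = (∑ k ∈ S, β k * xi k) + β j * x j ω + ∑ k, cT k * x k ω := by
      calc ∑ k, β k * (if k ∈ S then xi k else x k ω)
          = ∑ k, ((if k ∈ S then β k * xi k else 0) + (if k = j then β j * x k ω else 0)
              + cT k * x k ω) := by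
            refine Finset.sum_congr rfl fun k _ => ?_
            by_cases hkj : k = j
            · subst hkj; simp [hjS, hcT]
            · by_cases hk : k ∈ S <;> simp [hk, hkj, hcT, Finset.mem_insert]
        _ = ((∑ k, if k ∈ S then β k * xi k else 0) + ∑ k, (if k = j then β j * x k ω else 0))
            + ∑ k, cT k * x k ω := by rw [Finset.sum_add_distrib, Finset.sum_add_distrib]
        _ = (∑ k ∈ S, β k * xi k) + β j * x j ω + ∑ k, cT k * x k ω := by
            rw [Finset.sum_ite_mem, Finset.univ_inter, Finset.sum_ite_eq']
            simp
    have hw : ∑ k, cT k * (x k ω * x j ω - xi j * x k ω)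
        = (∑ k, cT k * x k ω) * (x j ω - xi j) := by
      rw [Finset.sum_mul]; exact Finset.sum_congr rfl fun k _ => by ring
    rw [eT, eS, hw, haS]
    ring
  rw [show (fun ω => (1 - (yi - ∑ k, β k * (if k ∈ insert j S then xi k else x k ω)) ^ 2 / σ2) -
        (1 - (yi - ∑ k, β k * (if k ∈ S then xi k else x k ω)) ^ 2 / σ2))
      = fun ω => ((β j) ^ 2 * (x j ω * x j ω - xi j ^ 2) + 2 * β j * aS * (xi j - x j ω)
          + 2 * β j * ∑ k, cT k * (x k ω * x j ω - xi j * x k ω)) / σ2 from funext hclaim]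
  have i1 : Integrable (fun ω => (β j) ^ 2 * (x j ω * x j ω - xi j ^ 2)) μ := hint_u.const_mul _
  have i2 : Integrable (fun ω => 2 * β j * aS * (xi j - x j ω)) μ := hint_v.const_mul _
  have i12 : Integrable (fun ω => (β j) ^ 2 * (x j ω * x j ω - xi j ^ 2)
      + 2 * β j * aS * (xi j - x j ω)) μ := by exact i1.add i2
  have i3 : Integrable (fun ω => 2 * β j * ∑ k, cT k * (x k ω * x j ω - xi j * x k ω)) μ :=
    hint_w.const_mul _
  rw [integral_div, integral_add i12 i3, integral_add i1 i2, integral_const_mul,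
    integral_const_mul, integral_const_mul]
  have hu : ∫ ω, (x j ω * x j ω - xi j ^ 2) ∂μ = (∫ ω, x j ω * x j ω ∂μ) - xi j ^ 2 := by
    rw [integral_sub (mul_int (hx j) (hx j)) (integrable_const _), integral_const]; simp
  have hv : ∫ ω, (xi j - x j ω) ∂μ = xi j - ∫ ω, x j ω ∂μ := by
    rw [integral_sub (integrable_const _) ((hx j).integrable one_le_two), integral_const]; simp
  have hw2 : ∫ ω, (∑ k, cT k * (x k ω * x j ω - xi j * x k ω)) ∂μ
      = ∑ k, cT k * ((∫ ω, x k ω * x j ω ∂μ) - xi j * ∫ ω, x k ω ∂μ) := by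
    rw [integral_finset_sum univ fun k _ => hint_w1 k]
    refine Finset.sum_congr rfl fun k _ => ?_
    rw [integral_const_mul, integral_sub (mul_int (hx k) (hx j))
      (((hx k).integrable one_le_two).const_mul (xi j)), integral_const_mul]
  rw [hu, hv, hw2]

end Aux

theorem indXPER_R2_linear_regression {Ω : Type*} [MeasurableSpace Ω] (μ : Measure Ω)
    [IsProbabilityMeasure μ] (q : ℕ) (x : Fin q → Ω → ℝ) (β : Fin q → ℝ) (σ2 : ℝ)
    (hσ : σ2 ≠ 0) (hx : ∀ k, MemLp (x k) 2 μ)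
    (yi : ℝ) (xi : Fin q → ℝ) (j : Fin q) :
    indXPER μ q x (fun yv xv => 1 - (yv - ∑ k, β k * xv k) ^ 2 / σ2) yi xi j
      = σ2⁻¹ *
        (β j * (xi j - ∫ ω, x j ω ∂μ)
            * (2 * yi - ∑ k ∈ Finset.univ.erase j, β k * (xi k + ∫ ω, x k ω ∂μ))
          - (β j) ^ 2 * ((xi j) ^ 2 - ∫ ω, (x j ω) ^ 2 ∂μ)
          + ∑ k ∈ Finset.univ.erase j, β k * β j * cov μ (x k) (x j)) := by
  classical
  simp only [indXPER]
  set E := Finset.univ.erase j with hE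
  have hEcard : E.card + 1 = q := by
    rw [hE, Finset.card_erase_of_mem (Finset.mem_univ j), Finset.card_univ, Fintype.card_fin]
    exact Nat.succ_pred_eq_of_pos j.pos
  set v : Fin q → ℝ := fun k => (∫ ω, x k ω * x j ω ∂μ) - xi j * ∫ ω, x k ω ∂μ with hv
  have h1 : ∑ S ∈ E.powerset, shapleyWeight q S = 1 := shapley_sum_one E hEcard
  have hrw : ∑ S ∈ E.powerset, shapleyWeight q S *
        ((∫ ω, (1 - (yi - ∑ k, β k * (if k ∈ insert j S then xi k else x k ω)) ^ 2 / σ2) ∂μ) -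
         (∫ ω, (1 - (yi - ∑ k, β k * (if k ∈ S then xi k else x k ω)) ^ 2 / σ2) ∂μ))
      = ∑ S ∈ E.powerset, shapleyWeight q S *
        (((β j) ^ 2 * ((∫ ω, x j ω * x j ω ∂μ) - xi j ^ 2)
          + 2 * β j * (yi - ∑ k ∈ S, β k * xi k) * (xi j - ∫ ω, x j ω ∂μ)
          + 2 * β j * ∑ k, (if k ∈ insert j S then 0 else β k) * v k) / σ2) := by
    refine Finset.sum_congr rfl fun S hS => ?_
    have hjS : j ∉ S := fun h => (Finset.mem_erase.mp (Finset.mem_powerset.mp hS h)).1 rfl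
    rw [integral_diff x hx β σ2 yi xi j S hjS]
  rw [hrw]
  have hsplit : ∀ S ∈ E.powerset, shapleyWeight q S *
        (((β j) ^ 2 * ((∫ ω, x j ω * x j ω ∂μ) - xi j ^ 2)
          + 2 * β j * (yi - ∑ k ∈ S, β k * xi k) * (xi j - ∫ ω, x j ω ∂μ)
          + 2 * β j * ∑ k, (if k ∈ insert j S then 0 else β k) * v k) / σ2)
      = σ2⁻¹ * (((β j) ^ 2 * ((∫ ω, x j ω * x j ω ∂μ) - xi j ^ 2)) * shapleyWeight q S
          + (2 * β j * (xi j - ∫ ω, x j ω ∂μ))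
              * (shapleyWeight q S * (yi - ∑ k ∈ S, β k * xi k))
          + (2 * β j) * (shapleyWeight q S * ∑ k ∈ E, (if k ∈ S then 0 else β k) * v k)) := by
    intro S hS
    have hcong : ∀ k ∈ Finset.univ.erase j,
        (if k ∈ insert j S then 0 else β k) * v k = (if k ∈ S then 0 else β k) * v k := by
      intro k hk
      have hkj : k ≠ j := (Finset.mem_erase.mp hk).1
      simp [Finset.mem_insert, hkj]
    have hWS : (∑ k, (if k ∈ insert j S then 0 else β k) * v k)
        = ∑ k ∈ E, (if k ∈ S then 0 else β k) * v k := by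
      rw [← Finset.add_sum_erase univ (fun k => (if k ∈ insert j S then 0 else β k) * v k)
        (Finset.mem_univ j), if_pos (Finset.mem_insert_self j S), zero_mul, zero_add]
      exact Finset.sum_congr rfl hcong
    rw [hWS]
    ring
  rw [Finset.sum_congr rfl hsplit, ← Finset.mul_sum, Finset.sum_add_distrib,
    Finset.sum_add_distrib, ← Finset.mul_sum, ← Finset.mul_sum, ← Finset.mul_sum, h1, mul_one]
  -- the aS-sum
  have h2 : ∑ S ∈ E.powerset, shapleyWeight q S * (yi - ∑ k ∈ S, β k * xi k)
      = yi - (1 / 2) * ∑ k ∈ E, β k * xi k := by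
    have step : ∀ S ∈ E.powerset, shapleyWeight q S * (yi - ∑ k ∈ S, β k * xi k)
        = shapleyWeight q S * yi
          - ∑ k ∈ E, (β k * xi k) * (shapleyWeight q S * (if k ∈ S then 1 else 0)) := by
      intro S hS
      have hSsub : S ⊆ E := Finset.mem_powerset.mp hS
      have e : ∑ k ∈ S, β k * xi k
          = ∑ k ∈ E, (β k * xi k) * (if k ∈ S then (1 : ℝ) else 0) := by
        rw [Finset.sum_congr rfl
          (fun k _ => by by_cases h : k ∈ S <;> simp [h] :
            ∀ k ∈ E, (β k * xi k) * (if k ∈ S then (1 : ℝ) else 0)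
              = if k ∈ S then β k * xi k else 0)]
        rw [Finset.sum_ite_mem, Finset.inter_eq_right.mpr hSsub]
      rw [e, mul_sub, Finset.mul_sum]
      congr 1
      exact Finset.sum_congr rfl fun k _ => mul_left_comm _ _ _
    rw [Finset.sum_congr rfl step, Finset.sum_sub_distrib, ← Finset.sum_mul, h1, one_mul,
      Finset.sum_comm]
    rw [Finset.sum_congr rfl
      (fun k hk => by rw [← Finset.mul_sum, shapley_sum_half E hEcard hk] :
        ∀ k ∈ E, (∑ S ∈ E.powerset, (β k * xi k) * (shapleyWeight q S *
          (if k ∈ S then (1 : ℝ) else 0))) = (β k * xi k) * (1 / 2))]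
    rw [← Finset.sum_mul]
    ring
  -- the w-sum
  have h3 : ∑ S ∈ E.powerset, shapleyWeight q S * (∑ k ∈ E, (if k ∈ S then 0 else β k) * v k)
      = (1 / 2) * ∑ k ∈ E, β k * v k := by
    have step : ∀ S ∈ E.powerset, shapleyWeight q S *
          (∑ k ∈ E, (if k ∈ S then 0 else β k) * v k)
        = ∑ k ∈ E, (β k * v k) * (shapleyWeight q S
            - shapleyWeight q S * (if k ∈ S then 1 else 0)) := by
      intro S hS
      rw [Finset.mul_sum]
      refine Finset.sum_congr rfl fun k _ => ?_
      by_cases h : k ∈ S <;> simp [h] <;> ring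
    rw [Finset.sum_congr rfl step, Finset.sum_comm]
    rw [Finset.sum_congr rfl
      (fun k hk => by
        rw [← Finset.mul_sum, Finset.sum_sub_distrib, h1, shapley_sum_half E hEcard hk] :
        ∀ k ∈ E, (∑ S ∈ E.powerset, (β k * v k) * (shapleyWeight q S
          - shapleyWeight q S * (if k ∈ S then (1 : ℝ) else 0)))
          = (β k * v k) * (1 - 1 / 2))]
    rw [← Finset.sum_mul]
    ring
  rw [h2, h3]
  -- now pure algebra on the RHS
  have hsq : (∫ ω, x j ω ^ 2 ∂μ) = ∫ ω, x j ω * x j ω ∂μ := by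
    simp_rw [pow_two]
  have hcov : ∑ k ∈ E, β k * β j * cov μ (x k) (x j)
      = β j * (∑ k ∈ E, β k * ∫ ω, x k ω * x j ω ∂μ)
        - β j * (∫ ω, x j ω ∂μ) * ∑ k ∈ E, β k * ∫ ω, x k ω ∂μ := by
    rw [Finset.sum_congr rfl (fun k _ => by
      rw [cov_eq (x k) (x j) (hx k) (hx j)]; ring :
      ∀ k ∈ E, β k * β j * cov μ (x k) (x j)
        = β j * (β k * ∫ ω, x k ω * x j ω ∂μ)
          - β j * (∫ ω, x j ω ∂μ) * (β k * ∫ ω, x k ω ∂μ))]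
    rw [Finset.sum_sub_distrib, ← Finset.mul_sum, ← Finset.mul_sum]
  have hxiE : ∑ k ∈ E, β k * (xi k + ∫ ω, x k ω ∂μ)
      = (∑ k ∈ E, β k * xi k) + ∑ k ∈ E, β k * ∫ ω, x k ω ∂μ := by
    rw [← Finset.sum_add_distrib]
    exact Finset.sum_congr rfl fun k _ => mul_add _ _ _
  have hvsum : ∑ k ∈ E, β k * v k
      = (∑ k ∈ E, β k * ∫ ω, x k ω * x j ω ∂μ)
        - xi j * ∑ k ∈ E, β k * ∫ ω, x k ω ∂μ := by
    rw [Finset.sum_congr rfl (fun k _ => by rw [hv]; ring :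
      ∀ k ∈ E, β k * v k = β k * (∫ ω, x k ω * x j ω ∂μ)
        - xi j * (β k * ∫ ω, x k ω ∂μ))]
    rw [Finset.sum_sub_distrib, ← Finset.mul_sum]
  rw [hsq, hcov, hxiE, hvsum]
  ring
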